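/- Let G be a graph, let F ⊆ E(G) be a matching, let C be a cycle in G with V(C) ≠ V(G), and let w ∈ V(C) have a neighbor a outside C. Then there exists a path P in G with vertex set V(C) ∪ {a}, of length |C|, containing all edges of F ∩ E(C). -/

import Mathlib

open Finset

lemma support_getLast?' {V : Type*} {G : SimpleGraph V} {u v : V} (p : G.Walk u v) :
    p.support.getLast? = some v := by
  induction p with
  | nil => rfl
  | cons h q ih =>
    rw [SimpleGraph.Walk.support_cons, q.support_eq_cons] at *
    rwa [List.getLast?_cons_cons]

lemma isCycle_reverse' {V : Type*} {G : SimpleGraph V} {w : V} {c : G.Walk w w}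
    (hc : c.IsCycle) : c.reverse.IsCycle := by
  have h3 := hc.three_le_length
  rw [SimpleGraph.Walk.isCycle_def] at hc ⊢
  obtain ⟨ht, hn, hnd⟩ := hc
  refine ⟨ht.reverse, ?_, ?_⟩
  · intro h
    apply hn
    rw [← SimpleGraph.Walk.reverse_reverse c, h, SimpleGraph.Walk.reverse_nil]
  · rw [SimpleGraph.Walk.support_reverse]
    have ht_ne : c.support.tail ≠ [] := by
      apply List.ne_nil_of_length_pos
      rw [List.length_tail, c.length_support]
      omega
    have hlast? : c.support.tail.getLast? = some w := by
      have h1 := support_getLast?' c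
      rw [c.support_eq_cons] at h1
      obtain ⟨x, l, hxl⟩ := List.exists_cons_of_ne_nil ht_ne
      rw [hxl] at h1 ⊢
      rwa [List.getLast?_cons_cons] at h1
    obtain ⟨dl, hdl⟩ : ∃ dl : List V, c.support.tail = dl ++ [w] :=
      ⟨_, (List.dropLast_append_getLast? w hlast?).symm⟩
    rw [hdl] at hnd
    rw [c.support_eq_cons, hdl]
    simp only [List.reverse_cons, List.reverse_append, List.reverse_nil, List.nil_append,
      List.cons_append, List.tail_cons]
    rw [List.nodup_append] at hnd ⊢
    refine ⟨by simpa using hnd.1, hnd.2.1, ?_⟩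
    intro x hx
    have := hnd.2.2 x (List.mem_reverse.mp hx)
    simpa using this

lemma getVert_support_getElem' {V : Type*} {G : SimpleGraph V} {u v : V}
    (p : G.Walk u v) {n : ℕ} (h : n ≤ p.length) :
    p.support[n]? = some (p.getVert n) := by
  induction p generalizing n with
  | nil =>
    have : n = 0 := by simpa using h
    subst this; simp
  | cons h q ih =>
    cases n with
    | zero => simp
    | succ n =>
      simp only [SimpleGraph.Walk.support_cons, List.getElem?_cons_succ,
        SimpleGraph.Walk.getVert_cons_succ]
      exact ih (by simpa using h)

lemma getVert_one_ne {V : Type*} {G : SimpleGraph V} {w : V} {c : G.Walk w w}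
    (hc : c.IsCycle) : c.getVert 1 ≠ c.reverse.getVert 1 := by
  rw [SimpleGraph.Walk.getVert_reverse]
  intro heq
  have h3 := hc.three_le_length
  have hnd : c.support.tail.Nodup := ((SimpleGraph.Walk.isCycle_def _).mp hc).2.2
  have key : ∀ n : ℕ, n + 1 ≤ c.length → c.support.tail[n]? = some (c.getVert (n + 1)) := by
    intro n hn
    have := getVert_support_getElem' c (n := n + 1) (by simpa using hn)
    rwa [SimpleGraph.Walk.support_eq_cons, List.getElem?_cons_succ] at this
  have h0 : c.support.tail[0]? = some (c.getVert 1) := key 0 (by omega)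
  have h1 : c.support.tail[c.length - 2]? = some (c.getVert (c.length - 1)) := by
    have := key (c.length - 2) (by omega)
    rwa [show c.length - 2 + 1 = c.length - 1 by omega] at this
  have hlen : c.support.tail.length = c.length := by
    rw [List.length_tail, c.length_support]; omega
  have : (0 : ℕ) = c.length - 2 :=
    (List.getElem?_inj (by omega) hnd).mp (by rw [h0, h1, heq])
  omega

lemma aux16 {V : Type*} [DecidableEq V] {G : SimpleGraph V} (F : Finset (Sym2 V))
    {w : V} (c : G.Walk w w) (hc : c.IsCycle)
    (a : V) (ha : a ∉ c.support) (hadj : G.Adj w a)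
    (hE : s(w, c.getVert 1) ∉ F) :
    ∃ (x y : V) (P : G.Walk x y), P.IsPath ∧
      P.support.toFinset = insert a c.support.toFinset ∧
      P.length = c.length ∧
      ∀ e ∈ F, e ∈ c.edges → e ∈ P.edges := by
  cases c with
  | nil => exact absurd hc.three_le_length (by simp)
  | @cons _ v _ h q =>
    rw [SimpleGraph.Walk.cons_isCycle_iff] at hc
    obtain ⟨hq, hne⟩ := hc
    simp only [SimpleGraph.Walk.getVert_cons_succ, SimpleGraph.Walk.getVert_zero] at hE
    simp only [SimpleGraph.Walk.support_cons, List.mem_cons, not_or] at ha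
    refine ⟨a, v, SimpleGraph.Walk.cons hadj.symm q.reverse, ?_, ?_, ?_, ?_⟩
    · rw [SimpleGraph.Walk.cons_isPath_iff]
      exact ⟨hq.reverse, by
        rw [SimpleGraph.Walk.support_reverse, List.mem_reverse]; exact ha.2⟩
    · have hw : w ∈ q.support := q.end_mem_support
      ext x
      simp only [SimpleGraph.Walk.support_cons, SimpleGraph.Walk.support_reverse,
        List.toFinset_cons, List.toFinset_reverse, Finset.mem_insert, List.mem_toFinset]
      constructor
      · rintro (rfl | hx) <;> tauto
      · rintro (rfl | rfl | hx) <;> tauto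
    · simp
    · intro e heF hec
      simp only [SimpleGraph.Walk.edges_cons, List.mem_cons] at hec ⊢
      rcases hec with rfl | hec
      · exact absurd heF hE
      · right; rw [SimpleGraph.Walk.edges_reverse, List.mem_reverse]; exact hec

/-- let `F` be a matching in `G`, `C` a non-spanning cycle, and
`a ∉ V(C)` a neighbor of `w ∈ V(C)`. Then there is a path in `G` with vertex set
`V(C) ∪ {a}`, of length `|C|`, containing all edges of `F ∩ E(C)`. -/
theorem stmt16 {V : Type*} [DecidableEq V] (G : SimpleGraph V)
    (F : Finset (Sym2 V)) (hFE : ∀ e ∈ F, e ∈ G.edgeSet)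
    (hFmatch : ∀ e ∈ F, ∀ f ∈ F, e ≠ f → ∀ v : V, v ∈ e → v ∉ f)
    {w : V} (c : G.Walk w w) (hc : c.IsCycle)
    (a : V) (ha : a ∉ c.support) (hadj : G.Adj w a) :
    ∃ (x y : V) (P : G.Walk x y), P.IsPath ∧
      P.support.toFinset = insert a c.support.toFinset ∧
      P.length = c.length ∧
      ∀ e ∈ F, e ∈ c.edges → e ∈ P.edges := by
  by_cases h1 : s(w, c.getVert 1) ∈ F
  · have h2 : s(w, c.reverse.getVert 1) ∉ F := by
      intro h2
      have hne : s(w, c.getVert 1) ≠ s(w, c.reverse.getVert 1) := by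
        intro heq
        exact getVert_one_ne hc (Sym2.congr_right.mp heq)
      exact hFmatch _ h1 _ h2 hne w (by simp) (by simp)
    obtain ⟨x, y, P, hP, hsupp, hlen, hedges⟩ :=
      aux16 F c.reverse (isCycle_reverse' hc) a
        (by rwa [SimpleGraph.Walk.support_reverse, List.mem_reverse]) hadj h2
    refine ⟨x, y, P, hP, ?_, ?_, ?_⟩
    · rw [hsupp]; congr 1
      rw [SimpleGraph.Walk.support_reverse, List.toFinset_reverse]
    · rwa [SimpleGraph.Walk.length_reverse] at hlen
    · intro e heF hec
      exact hedges e heF (by rwa [SimpleGraph.Walk.edges_reverse, List.mem_reverse])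
  · exact aux16 F c hc a ha hadj h1
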